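/- Given, for each a ∈ A, a partial sequential function F_a : A^A ⇀ A, there exists α ∈ A^A such that for all β ∈ A^A and a ∈ A, φ^a(α,β) is defined iff F_a(β) is defined, and they are equal when defined. Consequently, if all F_a(β) are defined, then αβ is defined and (αβ)(a) = F_a(β) for all a. -/

import Mathlib

open Classical

noncomputable section

namespace OostenK2

universe u

/-! ### Finite partial functions -/

/-- Finite partial functions `A ⇀ A`, as finite functional graphs,
ordered by inclusion of graphs. -/
abbrev FPF (A : Type u) : Type u :=
  {p : Set (A × A) // (∀ ⦃a b b'⦄, (a, b) ∈ p → (a, b') ∈ p → b = b') ∧ p.Finite}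

variable {A : Type u}

/-- The domain of a finite partial function. -/
def FPF.dom (p : FPF A) : Set A := Prod.fst '' p.val

/-- The empty finite partial function (the root of sequential trees). -/
def FPF.empty (A : Type u) : FPF A :=
  ⟨∅, fun _ _ _ h => absurd h (Set.notMem_empty _), Set.finite_empty⟩

/-- A total function `α` extends the finite partial function `p`. -/
def agrees (α : A → A) (p : FPF A) : Prop := ∀ ⦃a b⦄, (a, b) ∈ p.val → α a = b

/-- A partial function `β` extends the finite partial function `p`. -/
def agreesP (β : A → Option A) (p : FPF A) : Prop :=
  ∀ ⦃a b⦄, (a, b) ∈ p.val → β a = some b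

/-- Two finite partial functions are compatible if their union is a function. -/
def compatFPF (s t : FPF A) : Prop :=
  ∀ ⦃a b b'⦄, (a, b) ∈ s.val → (a, b') ∈ t.val → b = b'

/-! ### Trees -/

section Trees

variable {X : Type*} [PartialOrder X]

/-- A leaf of `T`: an element of `T` with no strict extension in `T`. -/
def IsLeaf (T : Set X) (p : X) : Prop := p ∈ T ∧ ¬∃ q ∈ T, p < q

/-- `q` is an immediate successor of `p` in `T`. -/
def ImmSucc (T : Set X) (p q : X) : Prop :=
  q ∈ T ∧ p < q ∧ ¬∃ t ∈ T, p < t ∧ t < q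

/-- `T` is a tree with root `root`: the root belongs to `T`, lies below every
element, and the predecessors of any element form a chain. -/
def IsTreeOn (root : X) (T : Set X) : Prop :=
  root ∈ T ∧ (∀ p ∈ T, root ≤ p) ∧ ∀ p ∈ T, IsChain (· ≤ ·) {t | t ∈ T ∧ t ≤ p}

/-- A tree is well-founded iff it has no infinite strictly increasing path. -/
def WellFoundedTree (T : Set X) : Prop :=
  ¬∃ f : ℕ → X, (∀ n, f n ∈ T) ∧ StrictMono f

end Trees

/-- A sequential tree: a tree of finite partial functions, rooted at the empty
function, in which all immediate successors of a non-leaf `p` have domain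
`dom p ∪ {a}` for a single `a ∉ dom p`. -/
def IsSeqTree (T : Set (FPF A)) : Prop :=
  IsTreeOn (FPF.empty A) T ∧
  ∀ p ∈ T, ¬IsLeaf T p →
    ∃ a ∉ FPF.dom p, ∀ q, ImmSucc T p q → FPF.dom q = insert a (FPF.dom p)

/-- A total sequential tree: the immediate successors of a non-leaf `p` are
*all* extensions of `p` with domain `dom p ∪ {a}`. -/
def IsTotalSeqTree (T : Set (FPF A)) : Prop :=
  IsTreeOn (FPF.empty A) T ∧
  ∀ p ∈ T, ¬IsLeaf T p →
    ∃ a ∉ FPF.dom p,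
      ∀ q : FPF A, ImmSucc T p q ↔ p < q ∧ FPF.dom q = insert a (FPF.dom p)

/-- `Φ` (as a relation `(A → A) → A → Prop`) is a partial sequential function:
`Φ α = b` iff the path of `α` through some total sequential tree `T` ends in a
leaf `v` with `F v = b`. -/
def SeqRel (Φ : (A → A) → A → Prop) : Prop :=
  ∃ (T : Set (FPF A)) (F : FPF A → A), IsTotalSeqTree T ∧
    ∀ α b, Φ α b ↔ ∃ v, IsLeaf T v ∧ agrees α v ∧ F v = b

/-- A total bisequential tree: pairs of finite partial functions ordered by
pairwise inclusion; at every non-leaf, either the first or the second component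
is interrogated at a single new argument, with all possible answers present. -/
def IsTotalBiTree (T : Set (FPF A × FPF A)) : Prop :=
  IsTreeOn (FPF.empty A, FPF.empty A) T ∧
  ∀ p ∈ T, ¬IsLeaf T p →
    (∃ a ∉ FPF.dom p.1, ∀ q : FPF A × FPF A,
        ImmSucc T p q ↔ q.2 = p.2 ∧ p.1 ≤ q.1 ∧ FPF.dom q.1 = insert a (FPF.dom p.1)) ∨
    (∃ b ∉ FPF.dom p.2, ∀ q : FPF A × FPF A,
        ImmSucc T p q ↔ q.1 = p.1 ∧ p.2 ≤ q.2 ∧ FPF.dom q.2 = insert b (FPF.dom p.2))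

/-- `G` is a total bisequential function. -/
def BiSeqTotal (G : (A → A) → (A → A) → A) : Prop :=
  ∃ (T : Set (FPF A × FPF A)) (F : FPF A × FPF A → A), IsTotalBiTree T ∧
    ∀ α β, ∃ v, IsLeaf T v ∧ agrees α v.1 ∧ agrees β v.2 ∧ G α β = F v

/-! ### Interrogations (total functions)

Throughout, `mk : List A → A` is an injective coding of finite sequences,
`qp b` is the code `⟨q,b⟩` of a query and `rp c` the code `⟨r,c⟩` of a result. -/

/-- `L` is an interrogation of `β` by `α`. -/
def Interrog (mk : List A → A) (qp : A → A) (α β : A → A) (L : List A) : Prop :=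
  ∀ j (hj : j < L.length), ∃ b, α (mk (L.take j)) = qp b ∧ β b = L[j]'hj

/-- `φ_α(β) = c` via interrogations. -/
def phiRel (mk : List A → A) (qp rp : A → A) (α β : A → A) (c : A) : Prop :=
  ∃ L, Interrog mk qp α β L ∧ α (mk L) = rp c

/-- `L` is an `a`-interrogation of `β` by `α`. -/
def AInterrog (mk : List A → A) (qp : A → A) (a : A) (α β : A → A) (L : List A) : Prop :=
  ∀ j (hj : j < L.length), ∃ b, α (mk (a :: L.take j)) = qp b ∧ β b = L[j]'hj

/-- `φ^a(α,β) = c` via `a`-interrogations. -/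
def phiA (mk : List A → A) (qp rp : A → A) (a : A) (α β : A → A) (c : A) : Prop :=
  ∃ L, AInterrog mk qp a α β L ∧ α (mk (a :: L)) = rp c

/-- The application of `K₂(A)`: `αβ` is defined with value `γ` iff
`φ^a(α,β) = γ a` for every `a`. -/
def AppRel (mk : List A → A) (qp rp : A → A) (α β γ : A → A) : Prop :=
  ∀ a, phiA mk qp rp a α β (γ a)

/-! ### Partial combinatory algebras (abstractly) -/

/-- A set with a partial binary application. -/
structure PCAStruct (X : Type*) where
  app : X → X → Part X

/-- Extension of the application to `Part`; `Part`-equality is Kleene equality. -/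
def pap {X : Type*} (S : PCAStruct X) (u v : Part X) : Part X :=
  u.bind fun a => v.bind fun b => S.app a b

/-- `S` is a partial combinatory algebra: there are `k`, `s` with
`kxy = x` (everywhere defined), `sxy` defined, and `sxyz ≃ (xz)(yz)`. -/
def IsPCA {X : Type*} (S : PCAStruct X) : Prop :=
  ∃ k s : X,
    (∀ x y : X, pap S (S.app k x) (Part.some y) = Part.some x) ∧
    (∀ x y : X, (pap S (S.app s x) (Part.some y)).Dom) ∧
    (∀ x y z : X,
      pap S (pap S (S.app s x) (Part.some y)) (Part.some z)
        = pap S (S.app x z) (S.app y z))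

/-- `t`, `f` are Booleans of `S`: distinct, with a definition-by-cases combinator. -/
def IsBooleans {X : Type*} (S : PCAStruct X) (t f : X) : Prop :=
  t ≠ f ∧ ∃ C : X, ∀ a b : X,
    pap S (pap S (S.app C t) (Part.some a)) (Part.some b) = Part.some a ∧
    pap S (pap S (S.app C f) (Part.some a)) (Part.some b) = Part.some b

/-- Applicative morphism `γ : S → T`: a total relation such that some realizer
`r` tracks application. -/
def IsAppMor {X Y : Type*} (S : PCAStruct X) (T : PCAStruct Y) (γ : X → Set Y) : Prop :=
  (∀ x, (γ x).Nonempty) ∧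
  ∃ r : Y, ∀ x x' z : X, z ∈ S.app x x' → ∀ b ∈ γ x, ∀ b' ∈ γ x',
    ∃ w, w ∈ pap T (T.app r b) (Part.some b') ∧ w ∈ γ z

/-- The preorder on applicative morphisms. -/
def morLE {X Y : Type*} (T : PCAStruct Y) (γ γ' : X → Set Y) : Prop :=
  ∃ s : Y, ∀ x : X, ∀ b ∈ γ x, ∃ c, c ∈ T.app s b ∧ c ∈ γ' x

def morEquiv {X Y : Type*} (T : PCAStruct Y) (γ γ' : X → Set Y) : Prop :=
  morLE T γ γ' ∧ morLE T γ' γ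

/-- Composition of applicative morphisms (as total relations). -/
def morComp {X Y Z : Type*} (γ : X → Set Y) (ε : Y → Set Z) : X → Set Z :=
  fun x => ⋃ y ∈ γ x, ε y

/-- Decidability of a morphism w.r.t. chosen Booleans. -/
def IsDecidableMor {X Y : Type*} (T : PCAStruct Y) (γ : X → Set Y)
    (tX fX : X) (tY fY : Y) : Prop :=
  ∃ d : Y, (∀ b ∈ γ tX, T.app d b = Part.some tY) ∧
    (∀ b ∈ γ fX, T.app d b = Part.some fY)

/-- `rf` represents the partial function `f : X ⇀ X` w.r.t. `γ`. -/
def RepresentsPFun {X Y : Type*} (T : PCAStruct Y) (γ : X → Set Y)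
    (f : X → Option X) (rf : Y) : Prop :=
  ∀ a x, f a = some x → ∀ b ∈ γ a, ∃ c, c ∈ T.app rf b ∧ c ∈ γ x

/-- The pca `K₂(A)` on `A^A` (application via `a`-interrogations). -/
def K2 (mk : List A → A) (qp rp : A → A) : PCAStruct (A → A) where
  app α β := ⟨∀ a, ∃ c, phiA mk qp rp a α β c, fun h a => (h a).choose⟩

/-! ### Interrogations for partial functions -/

/-- Interrogation of a partial `β` by a partial `α`. -/
def PInterrog (mk : List A → A) (qp : A → A) (α β : A → Option A) (L : List A) : Prop :=
  ∀ j (hj : j < L.length), ∃ b, α (mk (L.take j)) = some (qp b) ∧ β b = some (L[j]'hj)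

/-- `φ_α(β) = c` for partial functions. -/
def phiPRel (mk : List A → A) (qp rp : A → A) (α β : A → Option A) (c : A) : Prop :=
  ∃ L, PInterrog mk qp α β L ∧ α (mk L) = some (rp c)

/-- `a`-interrogation of a partial `β` by a partial `α`. -/
def PAInterrog (mk : List A → A) (qp : A → A) (a : A) (α β : A → Option A)
    (L : List A) : Prop :=
  ∀ j (hj : j < L.length), ∃ b, α (mk (a :: L.take j)) = some (qp b) ∧ β b = some (L[j]'hj)

/-- `φ^a(α,β) = c` for partial functions. -/
def phiPA (mk : List A → A) (qp rp : A → A) (a : A) (α β : A → Option A) (c : A) : Prop :=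
  ∃ L, PAInterrog mk qp a α β L ∧ α (mk (a :: L)) = some (rp c)

/-- The (total!) application of `K₂^p(A)` on partial functions. -/
def K2pApp (mk : List A → A) (qp rp : A → A) (α β : A → Option A) : A → Option A :=
  fun a => if h : ∃ c, phiPA mk qp rp a α β c then some h.choose else none

/-- `K₂^p(A)` as a `PCAStruct` (with everywhere-defined application). -/
def K2p (mk : List A → A) (qp rp : A → A) : PCAStruct (A → Option A) :=
  ⟨fun α β => Part.some (K2pApp mk qp rp α β)⟩

/-! ### A pca with standard structure (Booleans, pairing, tuple coding, recursion) -/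

/-- A pca together with the standard derived structure: Booleans with a case
combinator, pairing, an injective standard tuple coding with combinators
manipulating it, and a fixed-point combinator. All of these exist in any
(nontrivial) pca. -/
structure StdPCA (A : Type u) where
  S : PCAStruct A
  isPCA : IsPCA S
  t : A
  f : A
  t_ne_f : t ≠ f
  Cc : A
  C_t : ∀ a b : A, pap S (pap S (S.app Cc t) (Part.some a)) (Part.some b) = Part.some a
  C_f : ∀ a b : A, pap S (pap S (S.app Cc f) (Part.some a)) (Part.some b) = Part.some b
  pairF : A → A → A
  Pc : A
  P0 : A
  P1 : A
  P_spec : ∀ x y : A, pap S (S.app Pc x) (Part.some y) = Part.some (pairF x y)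
  P0_spec : ∀ x y : A, S.app P0 (pairF x y) = Part.some x
  P1_spec : ∀ x y : A, S.app P1 (pairF x y) = Part.some y
  tup : List A → A
  tup_inj : Function.Injective tup
  CONS : A
  CONS_spec : ∀ (x : A) (L : List A),
    pap S (S.app CONS x) (Part.some (tup L)) = Part.some (tup (x :: L))
  SNOC : A
  SNOC_spec : ∀ (L : List A) (y : A),
    pap S (S.app SNOC (tup L)) (Part.some y) = Part.some (tup (L ++ [y]))
  Zc : A
  Z_spec : ∀ g : A, (S.app Zc g).Dom ∧ ∀ zg ∈ S.app Zc g, ∀ x : A,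
    S.app zg x = pap S (S.app g zg) (Part.some x)

/-- The partial function `x ↦ a·x` represented by `a ∈ A`. -/
def abar (P : StdPCA A) (a : A) : A → Option A :=
  fun x => if h : (P.S.app a x).Dom then some ((P.S.app a x).get h) else none

/-- An `x`-interrogation of the oracle `g : A ⇀ A` by `a ∈ A`, inside the pca. -/
def OInterrog (P : StdPCA A) (g : A → Option A) (a x : A) (L : List A) : Prop :=
  ∀ j (hj : j < L.length), ∃ v,
    P.S.app a (P.tup (x :: L.take j)) = Part.some (P.pairF P.f v) ∧ g v = some (L[j]'hj)

/-- The oracle application of `A[g]` : `a ·^g x = c`. -/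
def oapp (P : StdPCA A) (g : A → Option A) (a x c : A) : Prop :=
  ∃ L, OInterrog P g a x L ∧ P.S.app a (P.tup (x :: L)) = Part.some (P.pairF P.t c)

/-- `fn ≤_T g` : `fn` is representable in `A[g]`. -/
def leT (P : StdPCA A) (fn g : A → Option A) : Prop :=
  ∃ a : A, ∀ x y, fn x = some y → oapp P g a x y

/-- `j` is the join `f ⊔ g`. -/
def JoinSpec (P : StdPCA A) (f g j : A → Option A) : Prop :=
  (∀ x, j (P.pairF P.t x) = f x) ∧ (∀ x, j (P.pairF P.f x) = g x) ∧
  (∀ y, (∀ x, y ≠ P.pairF P.t x ∧ y ≠ P.pairF P.f x) → j y = none)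

/-- `K₂(A)` (built from the coding `mk`, `q`, `r`) is compatible with the pca
structure on `A`: elements of `A` translate between the codings and between
`q, r` and `⊥, ⊤`. -/
def CompatCoding (P : StdPCA A) (mk : List A → A) (q r : A) : Prop :=
  (∃ a : A, ∀ L, P.S.app a (mk L) = Part.some (P.tup L)) ∧
  (∃ b : A, ∀ L, P.S.app b (P.tup L) = Part.some (mk L)) ∧
  (∃ c : A, P.S.app c q = Part.some P.f ∧ P.S.app c r = Part.some P.t)
/-! ### Auxiliary material for statement5 -/
section Aux5

attribute [local instance] Classical.propDecidable

variable {A : Type u}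

lemma FPF.le_def {p v : FPF A} : p ≤ v ↔ p.val ⊆ v.val := Iff.rfl

lemma FPF.dom_finite (p : FPF A) : p.dom.Finite := p.prop.2.image _

lemma FPF.mem_dom {p : FPF A} {a : A} : a ∈ p.dom ↔ ∃ b, (a, b) ∈ p.val := by
  constructor
  · rintro ⟨⟨x, y⟩, hxy, rfl⟩; exact ⟨y, hxy⟩
  · rintro ⟨b, hb⟩; exact ⟨(a, b), hb, rfl⟩

lemma FPF.dom_mono {p v : FPF A} (h : p ≤ v) : p.dom ⊆ v.dom := by
  rintro x ⟨y, hy, rfl⟩; exact ⟨y, h hy, rfl⟩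

lemma FPF.eq_of_le_of_dom_subset {p v : FPF A} (h : p ≤ v) (hd : v.dom ⊆ p.dom) :
    p = v := by
  apply Subtype.ext
  apply Set.Subset.antisymm h
  rintro ⟨x, y⟩ hxy
  obtain ⟨y', hy'⟩ := FPF.mem_dom.1 (hd ⟨(x, y), hxy, rfl⟩)
  have := v.prop.1 hxy (h hy')
  subst this
  exact hy'

lemma FPF.dom_empty : (FPF.empty A).dom = ∅ := by
  simp [FPF.empty, FPF.dom]

/-- Extend a finite partial function by the pair `(a, b)` (overriding at `a`). -/
def FPF.extend (p : FPF A) (a b : A) : FPF A :=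
  ⟨insert (a, b) {x ∈ p.val | x.1 ≠ a}, by
    intro x y y' hy hy'
    rcases Set.mem_insert_iff.1 hy with h1 | h1 <;>
      rcases Set.mem_insert_iff.1 hy' with h2 | h2
    · rw [Prod.mk.injEq] at h1 h2; exact h1.2.trans h2.2.symm
    · exact absurd (Prod.mk.injEq .. ▸ h1).1 h2.2
    · exact absurd (Prod.mk.injEq .. ▸ h2).1 h1.2
    · exact p.prop.1 h1.1 h2.1,
    (p.prop.2.subset (Set.sep_subset _ _)).insert _⟩

lemma FPF.mem_extend {p : FPF A} {a b x y : A} :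
    (x, y) ∈ (p.extend a b).val ↔ (x = a ∧ y = b) ∨ ((x, y) ∈ p.val ∧ x ≠ a) := by
  simp only [FPF.extend, Set.mem_insert_iff, Set.mem_setOf_eq, Prod.mk.injEq]

lemma FPF.le_extend {p : FPF A} {a b : A} (ha : a ∉ p.dom) : p ≤ p.extend a b := by
  rintro ⟨x, y⟩ hxy
  exact FPF.mem_extend.2 (Or.inr ⟨hxy, fun hxa => ha (FPF.mem_dom.2 ⟨y, hxa ▸ hxy⟩)⟩)

lemma FPF.lt_extend {p : FPF A} {a b : A} (ha : a ∉ p.dom) : p < p.extend a b := by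
  refine lt_of_le_of_ne (FPF.le_extend ha) fun h => ha ?_
  have : (a, b) ∈ p.val := h ▸ FPF.mem_extend.2 (Or.inl ⟨rfl, rfl⟩)
  exact FPF.mem_dom.2 ⟨b, this⟩

lemma FPF.dom_extend {p : FPF A} {a b : A} (ha : a ∉ p.dom) :
    (p.extend a b).dom = insert a p.dom := by
  ext x
  constructor
  · intro hx
    obtain ⟨y, hy⟩ := FPF.mem_dom.1 hx
    rcases FPF.mem_extend.1 hy with ⟨rfl, _⟩ | ⟨h, _⟩
    · exact Set.mem_insert _ _
    · exact Set.mem_insert_of_mem _ (FPF.mem_dom.2 ⟨y, h⟩)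
  · intro hx
    rcases Set.mem_insert_iff.1 hx with rfl | hx
    · exact FPF.mem_dom.2 ⟨b, FPF.mem_extend.2 (Or.inl ⟨rfl, rfl⟩)⟩
    · obtain ⟨y, hy⟩ := FPF.mem_dom.1 hx
      exact FPF.mem_dom.2 ⟨y, FPF.mem_extend.2 (Or.inr ⟨hy, fun h => ha (h ▸ hx)⟩)⟩

lemma agrees_extend {β : A → A} {p : FPF A} {a b : A} (hp : agrees β p) (hab : β a = b) :
    agrees β (p.extend a b) := by
  intro x y hxy
  rcases FPF.mem_extend.1 hxy with ⟨rfl, rfl⟩ | ⟨h, _⟩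
  · exact hab
  · exact hp h

lemma agrees_empty (β : A → A) : agrees β (FPF.empty A) := by
  intro x y hxy; exact absurd hxy (Set.notMem_empty _)

/-- The argument interrogated at a non-leaf node of a total sequential tree. -/
noncomputable def treeArg [Nonempty A] (T : Set (FPF A)) (p : FPF A) : A :=
  if h : ∃ a, a ∉ FPF.dom p ∧ ∀ q : FPF A,
      ImmSucc T p q ↔ p < q ∧ FPF.dom q = insert a (FPF.dom p)
  then h.choose else Classical.arbitrary A

lemma treeArg_spec [Nonempty A] {T : Set (FPF A)} (hT : IsTotalSeqTree T) {p : FPF A}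
    (hp : p ∈ T) (hnl : ¬IsLeaf T p) :
    treeArg T p ∉ FPF.dom p ∧ ∀ q : FPF A,
      ImmSucc T p q ↔ p < q ∧ FPF.dom q = insert (treeArg T p) (FPF.dom p) := by
  have h : ∃ a, a ∉ FPF.dom p ∧ ∀ q : FPF A,
      ImmSucc T p q ↔ p < q ∧ FPF.dom q = insert a (FPF.dom p) := hT.2 p hp hnl
  rw [treeArg, dif_pos h]
  exact h.choose_spec

lemma extend_immSucc [Nonempty A] {T : Set (FPF A)} (hT : IsTotalSeqTree T) {p : FPF A}
    (hp : p ∈ T) (hnl : ¬IsLeaf T p) (b : A) :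
    ImmSucc T p (p.extend (treeArg T p) b) := by
  obtain ⟨ha, hiff⟩ := treeArg_spec hT hp hnl
  exact (hiff _).2 ⟨FPF.lt_extend ha, FPF.dom_extend ha⟩

/-- If `p < v` in a total sequential tree, the interrogated argument of `p`
belongs to the domain of `v`. -/
lemma treeArg_mem_dom [Nonempty A] {T : Set (FPF A)} (hT : IsTotalSeqTree T)
    {p v : FPF A} (hp : p ∈ T) (hv : v ∈ T) (hpv : p < v) :
    treeArg T p ∈ FPF.dom v := by
  have hnl : ¬IsLeaf T p := fun hl => hl.2 ⟨v, hv, hpv⟩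
  set S : Set (FPF A) := {t | t ∈ T ∧ p < t ∧ t ≤ v} with hS
  have hfin : S.Finite := by
    have h1 : {s : Set (A × A) | s ⊆ v.val}.Finite := v.prop.2.finite_subsets
    have h2 : (Subtype.val ⁻¹' {s : Set (A × A) | s ⊆ v.val} :
        Set (FPF A)).Finite :=
      h1.preimage (Set.injOn_of_injective Subtype.val_injective)
    exact h2.subset fun t ht => ht.2.2
  have hvS : v ∈ S := ⟨hv, hpv, le_rfl⟩
  obtain ⟨m, -, hm, hmin⟩ := Set.Finite.exists_le_minimal hfin hvS
  have himm : ImmSucc T p m := by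
    refine ⟨hm.1, hm.2.1, ?_⟩
    rintro ⟨t, htT, hpt, htm⟩
    exact absurd (hmin ⟨htT, hpt, htm.le.trans hm.2.2⟩ htm.le) (not_le_of_gt htm)
  have hd := (((treeArg_spec hT hp hnl).2 m).1 himm).2
  exact FPF.dom_mono hm.2.2 (hd ▸ Set.mem_insert _ _)


/-- Run a total sequential tree on a list of oracle answers. -/
noncomputable def runT [Nonempty A] (T : Set (FPF A)) : List A → FPF A → Option (FPF A)
  | [], p => some p
  | b :: L, p =>
    if p ∈ T ∧ ¬IsLeaf T p then runT T L (p.extend (treeArg T p) b) else none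

lemma runT_nil [Nonempty A] (T : Set (FPF A)) (p : FPF A) : runT T [] p = some p := rfl

lemma runT_cons [Nonempty A] {T : Set (FPF A)} {p : FPF A} (hp : p ∈ T)
    (hnl : ¬IsLeaf T p) (b : A) (L : List A) :
    runT T (b :: L) p = runT T L (p.extend (treeArg T p) b) := by
  rw [runT, if_pos ⟨hp, hnl⟩]

lemma runT_append [Nonempty A] (T : Set (FPF A)) (M N : List A) (p : FPF A) :
    runT T (M ++ N) p = (runT T M p).bind (runT T N) := by
  induction M generalizing p with
  | nil => rfl
  | cons b M ih =>
    by_cases h : p ∈ T ∧ ¬IsLeaf T p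
    · rw [List.cons_append, runT_cons h.1 h.2, runT_cons h.1 h.2, ih]
    · show (if _ then _ else _) = Option.bind (if _ then _ else _) _
      rw [if_neg h, if_neg h]; rfl

/-- The path through the tree determined by the oracle `β`. -/
noncomputable def bpath [Nonempty A] (T : Set (FPF A)) (β : A → A) : ℕ → FPF A
  | 0 => FPF.empty A
  | j + 1 =>
    let p := bpath T β j
    p.extend (treeArg T p) (β (treeArg T p))

/-- The strategy function built from a family of trees and leaf-labellings. -/
noncomputable def alphaOf [Nonempty A] (code : List A → A) (q r : A)
    (T : A → Set (FPF A)) (Fl : A → FPF A → A) : A → A := fun x =>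
  if h : ∃ m : A × List A, code (m.1 :: m.2) = x then
    match runT (T h.choose.1) h.choose.2 (FPF.empty A) with
    | some p =>
        if IsLeaf (T h.choose.1) p then code [r, Fl h.choose.1 p]
        else code [q, treeArg (T h.choose.1) p]
    | none => code []
  else code []

lemma alphaOf_code [Nonempty A] {code : List A → A} (hcode : Function.Injective code)
    (q r : A) (T : A → Set (FPF A)) (Fl : A → FPF A → A) (a : A) (L : List A) :
    alphaOf code q r T Fl (code (a :: L)) =
      match runT (T a) L (FPF.empty A) with
      | some p =>
          if IsLeaf (T a) p then code [r, Fl a p] else code [q, treeArg (T a) p]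
      | none => code [] := by
  have h : ∃ m : A × List A, code (m.1 :: m.2) = code (a :: L) := ⟨(a, L), rfl⟩
  have hch : h.choose.1 = a ∧ h.choose.2 = L := by
    have := hcode h.choose_spec
    exact ⟨(List.cons.injEq .. ▸ this).1, (List.cons.injEq .. ▸ this).2⟩
  rw [alphaOf, dif_pos h, hch.1, hch.2]


lemma alphaOf_runT_some [Nonempty A] {code : List A → A} (hcode : Function.Injective code)
    (q r : A) (T : A → Set (FPF A)) (Fl : A → FPF A → A) {a : A} {L : List A} {p : FPF A}
    (h : runT (T a) L (FPF.empty A) = some p) :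
    alphaOf code q r T Fl (code (a :: L)) =
      if IsLeaf (T a) p then code [r, Fl a p] else code [q, treeArg (T a) p] := by
  rw [alphaOf_code hcode, h]

end Aux5


/-- Given partial sequential functions `F_a : A^A ⇀ A` for each
`a ∈ A`, there is `α ∈ A^A` with `φ^a(α,β) ≃ F_a(β)` for all `β, a`; hence if
all `F_a(β)` are defined then `αβ` is defined with `(αβ)(a) = F_a(β)`. -/
theorem statement5 {A : Type u} [Infinite A] (code : List A → A)
    (hcode : Function.Injective code) (q r : A) (hqr : q ≠ r)
    (F : A → (A → A) → Option A)
    (hF : ∀ a : A, SeqRel (fun β b => F a β = some b)) :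
    ∃ α : A → A,
      (∀ (β : A → A) (a b : A),
        phiA code (fun x => code [q, x]) (fun x => code [r, x]) a α β b ↔ F a β = some b) ∧
      ∀ β : A → A, (∀ a, ∃ b, F a β = some b) →
        ∃ γ : A → A,
          AppRel code (fun x => code [q, x]) (fun x => code [r, x]) α β γ ∧
          ∀ a, F a β = some (γ a) := by
  classical
  choose T Fl hT hspec using hF
  set α := alphaOf code q r T Fl with hα
  have main : ∀ (β : A → A) (a b : A),
      phiA code (fun x => code [q, x]) (fun x => code [r, x]) a α β b ↔ F a β = some b := by
    intro β a b
    constructor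
    · rintro ⟨L, hInt, hEnd⟩
      have key : ∀ j, j ≤ L.length → ∃ p, runT (T a) (L.take j) (FPF.empty A) = some p ∧
          p ∈ T a ∧ agrees β p := by
        intro j
        induction j with
        | zero => exact fun _ => ⟨FPF.empty A, rfl, (hT a).1.1, agrees_empty β⟩
        | succ j ih =>
          intro hj
          have hjlt : j < L.length := hj
          obtain ⟨p, hrun, hpT, hpag⟩ := ih (le_of_lt hjlt)
          obtain ⟨x, hax, hbx⟩ := hInt j hjlt
          rw [hα, alphaOf_runT_some hcode q r T Fl hrun] at hax
          by_cases hl : IsLeaf (T a) p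
          · rw [if_pos hl] at hax
            obtain ⟨h1, -⟩ : r = q ∧ Fl a p = x := by simpa using hcode hax
            exact absurd h1.symm hqr
          · rw [if_neg hl] at hax
            have hxeq : treeArg (T a) p = x := by simpa using hcode hax
            have htake : L.take (j + 1) = L.take j ++ [L[j]'hjlt] := by
              rw [List.take_succ, List.getElem?_eq_getElem hjlt]
              rfl
            refine ⟨p.extend (treeArg (T a) p) (L[j]'hjlt), ?_, ?_, ?_⟩
            · rw [htake, runT_append, hrun, Option.bind_some, runT_cons hpT hl, runT_nil]
            · exact (extend_immSucc (hT a) hpT hl (L[j]'hjlt)).1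
            · exact agrees_extend hpag (by rw [hxeq]; exact hbx)
      obtain ⟨p, hrun, hpT, hpag⟩ := key L.length le_rfl
      rw [List.take_length] at hrun
      rw [hα, alphaOf_runT_some hcode q r T Fl hrun] at hEnd
      by_cases hl : IsLeaf (T a) p
      · rw [if_pos hl] at hEnd
        have hFb : Fl a p = b := by simpa using hcode hEnd
        exact (hspec a β b).2 ⟨p, hl, hpag, hFb⟩
      · rw [if_neg hl] at hEnd
        obtain ⟨h1, -⟩ : q = r ∧ treeArg (T a) p = b := by simpa using hcode hEnd
        exact absurd h1 hqr
    · intro hFab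
      obtain ⟨v, hvleaf, hvagr, hvF⟩ := (hspec a β b).1 hFab
      have hvT : v ∈ T a := hvleaf.1
      set n := (FPF.dom v).ncard with hn
      have inv : ∀ j, j ≤ n → bpath (T a) β j ∈ T a ∧ bpath (T a) β j ≤ v ∧
          ((bpath (T a) β j).dom).ncard = j := by
        intro j
        induction j with
        | zero =>
          refine fun _ => ⟨(hT a).1.1, ?_, ?_⟩
          · intro z hz; exact absurd hz (Set.notMem_empty z)
          · show ((FPF.empty A).dom).ncard = 0
            rw [FPF.dom_empty]; exact Set.ncard_empty _
        | succ j ih =>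
          intro hj
          obtain ⟨hpT, hpv, hcard⟩ := ih (Nat.le_of_succ_le hj)
          have hne : bpath (T a) β j ≠ v := by
            intro h
            rw [h] at hcard
            exact absurd (hn.trans hcard) (by omega)
          have hplt : bpath (T a) β j < v := lt_of_le_of_ne hpv hne
          have hnl : ¬IsLeaf (T a) (bpath (T a) β j) := fun hl => hl.2 ⟨v, hvT, hplt⟩
          have harg : treeArg (T a) (bpath (T a) β j) ∉ (bpath (T a) β j).dom :=
            (treeArg_spec (hT a) hpT hnl).1
          have hargv : treeArg (T a) (bpath (T a) β j) ∈ FPF.dom v :=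
            treeArg_mem_dom (hT a) hpT hvT hplt
          obtain ⟨c, hc⟩ := FPF.mem_dom.1 hargv
          have hbc : β (treeArg (T a) (bpath (T a) β j)) = c := hvagr hc
          have hb1 : bpath (T a) β (j + 1) =
              (bpath (T a) β j).extend (treeArg (T a) (bpath (T a) β j))
                (β (treeArg (T a) (bpath (T a) β j))) := rfl
          refine ⟨hb1 ▸ (extend_immSucc (hT a) hpT hnl _).1, ?_, ?_⟩
          · rw [hb1]
            rintro ⟨x, y⟩ hxy
            rcases FPF.mem_extend.1 hxy with ⟨rfl, rfl⟩ | ⟨h, -⟩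
            · rw [hbc]; exact hc
            · exact hpv h
          · rw [hb1, FPF.dom_extend harg,
              Set.ncard_insert_of_notMem harg (bpath (T a) β j).dom_finite, hcard]
      have hstep : ∀ j, j < n → bpath (T a) β j ∈ T a ∧
          ¬IsLeaf (T a) (bpath (T a) β j) := by
        intro j hj
        obtain ⟨hpT, hpv, hcard⟩ := inv j (le_of_lt hj)
        have hne : bpath (T a) β j ≠ v := by
          intro h
          rw [h] at hcard
          exact absurd (hn.trans hcard) (by omega)
        exact ⟨hpT, fun hl => hl.2 ⟨v, hvT, lt_of_le_of_ne hpv hne⟩⟩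
      obtain ⟨hnT, hnv, hncard⟩ := inv n le_rfl
      have hbn : bpath (T a) β n = v := by
        refine FPF.eq_of_le_of_dom_subset hnv ?_
        have hdeq : (bpath (T a) β n).dom = FPF.dom v :=
          Set.eq_of_subset_of_ncard_le (FPF.dom_mono hnv)
            (by rw [hncard]) v.dom_finite
        rw [hdeq]
      set L : List A := (List.range n).map fun j => β (treeArg (T a) (bpath (T a) β j))
        with hL
      have hlen : L.length = n := by simp [hL]
      have hrunL : ∀ j, j ≤ n → runT (T a) (L.take j) (FPF.empty A) =
          some (bpath (T a) β j) := by
        intro j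
        induction j with
        | zero => exact fun _ => rfl
        | succ j ih =>
          intro hj
          have hjlt : j < n := hj
          have hjL : j < L.length := by rw [hlen]; exact hjlt
          have hLj : L[j]'hjL = β (treeArg (T a) (bpath (T a) β j)) := by
            simp [hL]
          have htake : L.take (j + 1) = L.take j ++ [L[j]'hjL] := by
            rw [List.take_succ, List.getElem?_eq_getElem hjL]
            rfl
          obtain ⟨hpT, hnl⟩ := hstep j hjlt
          rw [htake, runT_append, ih (le_of_lt hjlt), Option.bind_some,
            runT_cons hpT hnl, runT_nil, hLj]
          rfl
      refine ⟨L, ?_, ?_⟩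
      · intro j hj
        have hjn : j < n := by rwa [hlen] at hj
        refine ⟨treeArg (T a) (bpath (T a) β j), ?_, ?_⟩
        · show α (code (a :: L.take j)) = code [q, treeArg (T a) (bpath (T a) β j)]
          rw [hα, alphaOf_runT_some hcode q r T Fl (hrunL j (le_of_lt hjn))]
          exact if_neg (hstep j hjn).2
        · simp [hL]
      · show α (code (a :: L)) = code [r, b]
        have hrLv : runT (T a) L (FPF.empty A) = some v := by
          have htl : L.take n = L := by rw [← hlen]; exact L.take_length
          rw [← htl, hrunL n le_rfl, hbn]
        rw [hα, alphaOf_runT_some hcode q r T Fl hrLv, if_pos hvleaf, hvF]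
  refine ⟨α, main, ?_⟩
  intro β hall
  refine ⟨fun a => (hall a).choose, fun a => ?_, fun a => (hall a).choose_spec⟩
  exact (main β a _).2 (hall a).choose_spec

end OostenK2
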